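/- Let n ≥ 1, let R be a commutative ring, and let U be the universal enveloping algebra of the Lie algebra M_{2n}(R) (with bracket [x,y] = xy − yx), with canonical Lie algebra map ι_U : M_{2n}(R) → U. Let A₁ be the R-subalgebra of U generated by the elements ι_U(ι(h₁,h₂)) for h₁, h₂ ∈ M_n(R), and let A₂ be the R-subalgebra of U generated by the elements ι_U(ξ·L·ξ^{-1}) for L ∈ M_{2n}(R) lower triangular. Then every element of U lies in the R-linear span of the products a·b with a ∈ A₁ and b ∈ A₂; in symbols, U(gl_{2n}) = U(h)·U(ξ b⁻ ξ^{-1}). -/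

import Mathlib

open Matrix

attribute [local instance 100] LieRing.ofAssociativeRing

/-- The `n × n` antidiagonal permutation matrix `w_n`, with `(i,j)` entry `δ_{i, n+1-j}`. -/
def wMat (n : ℕ) (R : Type*) [CommRing R] : Matrix (Fin n) (Fin n) R :=
  fun i j => if (i : ℕ) + (j : ℕ) + 1 = n then 1 else 0

lemma wMat_apply_eq {n : ℕ} {R : Type*} [CommRing R] (i j : Fin n) :
    wMat n R i j = if j = i.rev then (1:R) else 0 := by
  have hi := i.isLt
  have : ((i:ℕ) + (j:ℕ) + 1 = n) ↔ (j = i.rev) := by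
    rw [Fin.ext_iff, Fin.val_rev]; omega
  simp [wMat, this]

lemma wMat_mul_apply {n : ℕ} {R : Type*} [CommRing R]
    (X : Matrix (Fin n) (Fin n) R) (i : Fin n) (j : Fin n) :
    (wMat n R * X) i j = X i.rev j := by
  rw [Matrix.mul_apply]
  have : ∀ k, wMat n R i k * X k j = if k = i.rev then X i.rev j else 0 := by
    intro k
    rw [wMat_apply_eq]
    by_cases h : k = i.rev <;> simp [h]
  simp [this]

lemma mul_wMat_apply {n : ℕ} {R : Type*} [CommRing R]
    (X : Matrix (Fin n) (Fin n) R) (i : Fin n) (j : Fin n) :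
    (X * wMat n R) i j = X i j.rev := by
  rw [Matrix.mul_apply]
  have : ∀ k, X i k * wMat n R k j = if k = j.rev then X i j.rev else 0 := by
    intro k
    rw [wMat_apply_eq]
    by_cases h : k = j.rev
    · subst h; simp [Fin.rev_rev]
    · have : ¬ (j = k.rev) := by
        intro hc; exact h (by rw [hc, Fin.rev_rev])
      simp [h, this]
  simp [this]

lemma wMat_sq (n : ℕ) (R : Type*) [CommRing R] : wMat n R * wMat n R = 1 := by
  ext i j
  rw [wMat_mul_apply, wMat_apply_eq, Fin.rev_rev, Matrix.one_apply]
  simp [eq_comm]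

/-- The block diagonal matrix `ι(A, D) = [[A, 0], [0, D]]`. -/
def iotaBlk {n : ℕ} {R : Type*} [CommRing R] (A D : Matrix (Fin n) (Fin n) R) :
    Matrix (Fin n ⊕ Fin n) (Fin n ⊕ Fin n) R :=
  Matrix.fromBlocks A 0 0 D

/-- The matrix `ξ = [[1_n, w_n], [0_n, w_n]]`. -/
def xiMat (n : ℕ) (R : Type*) [CommRing R] : Matrix (Fin n ⊕ Fin n) (Fin n ⊕ Fin n) R :=
  Matrix.fromBlocks 1 (wMat n R) 0 (wMat n R)

/-- The matrix `ξ⁻¹ = [[1_n, -1_n], [0_n, w_n]]`. -/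
def xiInvMat (n : ℕ) (R : Type*) [CommRing R] : Matrix (Fin n ⊕ Fin n) (Fin n ⊕ Fin n) R :=
  Matrix.fromBlocks 1 (-1) 0 (wMat n R)

lemma xi_mul_xiInv (n : ℕ) (R : Type*) [CommRing R] :
    xiMat n R * xiInvMat n R = 1 := by
  rw [xiMat, xiInvMat, Matrix.fromBlocks_multiply, ← Matrix.fromBlocks_one]
  congr 1 <;> simp [wMat_sq]

lemma matrix_decomp (n : ℕ) (R : Type*) [CommRing R]
    (M : Matrix (Fin n ⊕ Fin n) (Fin n ⊕ Fin n) R) :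
    ∃ D₁ D₂ : Matrix (Fin n) (Fin n) R,
      ∃ L : Matrix (Fin n ⊕ Fin n) (Fin n ⊕ Fin n) R,
        (∀ i j : Fin n ⊕ Fin n,
            (finSumFinEquiv i : ℕ) < (finSumFinEquiv j : ℕ) → L i j = 0) ∧
        M = iotaBlk D₁ D₂ + xiMat n R * L * xiInvMat n R := by
  set w := wMat n R with hw
  set A := M.toBlocks₁₁ with hA
  set B := M.toBlocks₁₂ with hB
  set C := M.toBlocks₂₁ with hC
  set D := M.toBlocks₂₂ with hD
  set D₁ : Matrix (Fin n) (Fin n) R :=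
    (fun i j => if (i : ℕ) < (j : ℕ) then (A - C) i j else (A + B) i j) with hD₁
  refine ⟨D₁, D₁ + C + D - A - B,
    Matrix.fromBlocks (A - D₁ - C) 0 (w * C) (w * (A + B - D₁) * w), ?_, ?_⟩
  · rintro (i | i) (j | j) hij <;>
      simp only [finSumFinEquiv_apply_left, finSumFinEquiv_apply_right,
        Fin.coe_castAdd, Fin.coe_natAdd] at hij
    · -- top-left
      simp only [Matrix.fromBlocks_apply₁₁, Matrix.sub_apply, hD₁]
      show A i j - (if (i:ℕ) < j then A i j - C i j else (A + B) i j) - C i j = 0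
      rw [if_pos hij]
      simp
    · simp
    · omega
    · simp only [Matrix.fromBlocks_apply₂₂]
      rw [mul_wMat_apply, wMat_mul_apply]
      have h1 : ¬ ((i.rev : ℕ) < (j.rev : ℕ)) := by
        have := i.isLt; have := j.isLt
        simp only [Fin.val_rev]; omega
      simp only [Matrix.sub_apply, Matrix.add_apply, hD₁]
      show (A + B) i.rev j.rev - (if (i.rev:ℕ) < j.rev then A i.rev j.rev - C i.rev j.rev
        else A i.rev j.rev + B i.rev j.rev) = 0
      rw [if_neg h1]
      simp
  · have hww : w * w = 1 := wMat_sq n R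
    have e1 : xiMat n R * Matrix.fromBlocks (A - D₁ - C) 0 (w * C) (w * (A + B - D₁) * w)
        = Matrix.fromBlocks (A - D₁) ((A + B - D₁) * w) C ((A + B - D₁) * w) := by
      rw [xiMat, ← hw, Matrix.fromBlocks_multiply, Matrix.fromBlocks_inj]
      refine ⟨?_, ?_, ?_, ?_⟩ <;>
        · simp only [← mul_assoc, hww]
          noncomm_ring
    have e2 : Matrix.fromBlocks (A - D₁) ((A + B - D₁) * w) C ((A + B - D₁) * w) * xiInvMat n R
        = Matrix.fromBlocks (A - D₁) B C (A + B - D₁ - C) := by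
      rw [xiInvMat, ← hw, Matrix.fromBlocks_multiply, Matrix.fromBlocks_inj]
      refine ⟨?_, ?_, ?_, ?_⟩ <;>
        · simp only [mul_assoc, hww]
          noncomm_ring
    rw [e1, e2, ← Matrix.fromBlocks_toBlocks M, ← hA, ← hB, ← hC, ← hD, iotaBlk,
      Matrix.fromBlocks_add, Matrix.fromBlocks_inj]
    refine ⟨by abel, by abel, by abel, by abel⟩

set_option synthInstance.maxHeartbeats 1000000 in
set_option maxHeartbeats 1000000 in

set_option synthInstance.maxHeartbeats 1000000 in
set_option maxHeartbeats 1000000 in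
theorem adjoin_range_uea_ι_eq_top (R : Type*) [CommRing R]
    (L : Type*) [LieRing L] [LieAlgebra R L] :
    Algebra.adjoin R (Set.range (UniversalEnvelopingAlgebra.ι R (L := L))) = ⊤ := by
  set S := Algebra.adjoin R (Set.range (UniversalEnvelopingAlgebra.ι R (L := L))) with hS
  let f : L →ₗ⁅R⁆ S :=
    { toFun := fun x => ⟨UniversalEnvelopingAlgebra.ι R x, Algebra.subset_adjoin ⟨x, rfl⟩⟩
      map_add' := fun x y => Subtype.ext (by simp)
      map_smul' := fun r x => Subtype.ext (by simp)
      map_lie' := fun {x y} => Subtype.ext (by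
        simp only [LieHom.map_lie, Ring.lie_def]
        rfl) }
  have h : S.val.comp (UniversalEnvelopingAlgebra.lift R f) = AlgHom.id R _ := by
    apply UniversalEnvelopingAlgebra.hom_ext
    ext x
    simp [UniversalEnvelopingAlgebra.lift_ι_apply, f]
  rw [eq_top_iff]
  intro u _
  have h2 : S.val ((UniversalEnvelopingAlgebra.lift R f) u) = u := by
    have := congrArg (fun g => g u) h
    simpa using this
  rw [← h2]
  exact ((UniversalEnvelopingAlgebra.lift R f) u).2


theorem uea_decomp_span (R : Type*) [CommRing R] (g : Type*) [LieRing g] [LieAlgebra R g]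
    (T₁ T₂ : Set g)
    (hdec : ∀ M : g, ∃ a ∈ T₁, ∃ b ∈ T₂, M = a + b)
    (u : UniversalEnvelopingAlgebra R g) :
    u ∈ Submodule.span R
      {x : UniversalEnvelopingAlgebra R g |
        ∃ a ∈ Algebra.adjoin R (UniversalEnvelopingAlgebra.ι R '' T₁),
        ∃ b ∈ Algebra.adjoin R (UniversalEnvelopingAlgebra.ι R '' T₂), x = a * b} := by
  set ιU : g → UniversalEnvelopingAlgebra R g := ⇑(UniversalEnvelopingAlgebra.ι R (L := g)) with hιU
  set A₁ := Algebra.adjoin R (ιU '' T₁) with hA₁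
  set A₂ := Algebra.adjoin R (ιU '' T₂) with hA₂
  set V : Submodule R (UniversalEnvelopingAlgebra R g) :=
    Submodule.span R {x | ∃ a ∈ A₁, ∃ b ∈ A₂, x = a * b} with hV
  set W : Submodule R (UniversalEnvelopingAlgebra R g) :=
    Submodule.span R ({x | x ∈ A₁} ∪ {x | ∃ a ∈ A₁, ∃ t ∈ T₂, x = a * ιU t}) with hW
  -- bracket compatibility
  have hlie : ∀ x y : g, ιU x * ιU y = ιU y * ιU x + ιU ⁅x, y⁆ := by
    intro x y
    have := (UniversalEnvelopingAlgebra.ι R (L := g)).map_lie x y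
    rw [hιU, this, Ring.lie_def]
    abel
  have hadd : ∀ x y : g, ιU (x + y) = ιU x + ιU y := fun x y => by
    rw [hιU]; exact (UniversalEnvelopingAlgebra.ι R).map_add x y
  -- A₁ * W ⊆ W
  have hA₁W : ∀ a ∈ A₁, ∀ w ∈ W, a * w ∈ W := by
    intro a ha w hw
    induction hw using Submodule.span_induction with
    | mem x hx =>
      rcases hx with hx | ⟨a', ha', t, ht, rfl⟩
      · exact Submodule.subset_span (Or.inl (mul_mem ha hx))
      · rw [← mul_assoc]
        exact Submodule.subset_span (Or.inr ⟨a * a', mul_mem ha ha', t, ht, rfl⟩)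
    | zero => rw [mul_zero]; exact W.zero_mem
    | add x y hx hy hx' hy' => rw [mul_add]; exact W.add_mem hx' hy'
    | smul r x hx hx' => rw [mul_smul_comm]; exact W.smul_mem r hx'
  -- ιU M ∈ W for every M
  have hιW : ∀ M : g, ιU M ∈ W := by
    intro M
    obtain ⟨a, ha, b, hb, rfl⟩ := hdec M
    rw [hadd]
    refine W.add_mem ?_ ?_
    · exact Submodule.subset_span (Or.inl (Algebra.subset_adjoin ⟨a, ha, rfl⟩))
    · exact Submodule.subset_span (Or.inr ⟨1, one_mem _, b, hb, (one_mul _).symm⟩)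
  -- key lemma: ιU M * a ∈ W for a ∈ A₁
  have key : ∀ a ∈ A₁, ∀ M : g, ιU M * a ∈ W := by
    intro a ha
    induction ha using Algebra.adjoin_induction with
    | mem x hx =>
      obtain ⟨h, hh, rfl⟩ := hx
      intro M
      rw [hlie M h]
      refine W.add_mem ?_ (hιW _)
      exact hA₁W _ (Algebra.subset_adjoin ⟨h, hh, rfl⟩) _ (hιW M)
    | algebraMap r =>
      intro M
      rw [← Algebra.commutes r (ιU M), ← Algebra.smul_def]
      exact W.smul_mem r (hιW M)
    | add x y hx hy hx' hy' =>
      intro M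
      rw [mul_add]
      exact W.add_mem (hx' M) (hy' M)
    | mul x y hx hy hx' hy' =>
      intro M
      rw [← mul_assoc]
      have hWy : ∀ w ∈ W, w * y ∈ W := by
        intro w hw
        induction hw using Submodule.span_induction with
        | mem z hz =>
          rcases hz with hz | ⟨a', ha', t, ht, rfl⟩
          · exact Submodule.subset_span (Or.inl (mul_mem hz hy))
          · rw [mul_assoc]
            exact hA₁W _ ha' _ (hy' t)
        | zero => rw [zero_mul]; exact W.zero_mem
        | add z₁ z₂ hz₁ hz₂ hz₁' hz₂' => rw [add_mul]; exact W.add_mem hz₁' hz₂'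
        | smul r z hz hz' => rw [smul_mul_assoc]; exact W.smul_mem r hz'
      exact hWy _ (hx' M)
  -- W * A₂ ⊆ V
  have hWV : ∀ w ∈ W, ∀ b ∈ A₂, w * b ∈ V := by
    intro w hw
    induction hw using Submodule.span_induction with
    | mem z hz =>
      intro b hb
      rcases hz with hz | ⟨a', ha', t, ht, rfl⟩
      · exact Submodule.subset_span ⟨z, hz, b, hb, rfl⟩
      · rw [mul_assoc]
        exact Submodule.subset_span
          ⟨a', ha', ιU t * b, mul_mem (Algebra.subset_adjoin ⟨t, ht, rfl⟩) hb, rfl⟩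
    | zero => intro b hb; rw [zero_mul]; exact V.zero_mem
    | add z₁ z₂ hz₁ hz₂ hz₁' hz₂' =>
      intro b hb; rw [add_mul]; exact V.add_mem (hz₁' b hb) (hz₂' b hb)
    | smul r z hz hz' =>
      intro b hb; rw [smul_mul_assoc]; exact V.smul_mem r (hz' b hb)
  -- every u multiplies V into V
  have hUV : ∀ u : UniversalEnvelopingAlgebra R g, ∀ v ∈ V, u * v ∈ V := by
    intro u
    have hu : u ∈ Algebra.adjoin R (Set.range (UniversalEnvelopingAlgebra.ι R (L := g))) := by
      rw [adjoin_range_uea_ι_eq_top]; trivial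
    induction hu using Algebra.adjoin_induction with
    | mem x hx =>
      obtain ⟨M, rfl⟩ := hx
      intro v hv
      induction hv using Submodule.span_induction with
      | mem z hz =>
        obtain ⟨a, ha, b, hb, rfl⟩ := hz
        rw [← mul_assoc]
        exact hWV _ (key a ha M) b hb
      | zero => rw [mul_zero]; exact V.zero_mem
      | add z₁ z₂ hz₁ hz₂ hz₁' hz₂' => rw [mul_add]; exact V.add_mem hz₁' hz₂'
      | smul r z hz hz' => rw [mul_smul_comm]; exact V.smul_mem r hz'
    | algebraMap r =>
      intro v hv
      rw [← Algebra.smul_def]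
      exact V.smul_mem r hv
    | add x y hx hy hx' hy' =>
      intro v hv
      rw [add_mul]
      exact V.add_mem (hx' v hv) (hy' v hv)
    | mul x y hx hy hx' hy' =>
      intro v hv
      rw [mul_assoc]
      exact hx' _ (hy' v hv)
  have h1V : (1 : UniversalEnvelopingAlgebra R g) ∈ V :=
    Submodule.subset_span ⟨1, one_mem _, 1, one_mem _, (one_mul 1).symm⟩
  simpa using hUV u 1 h1V

/-- `U(gl_{2n}) = U(h) · U(ξ b⁻ ξ⁻¹)`: every element of the universal enveloping algebra of
`M_{2n}(R)` is an `R`-linear combination of products `a · b`, with `a` in the subalgebra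
generated by the block diagonal matrices `ι(h₁,h₂)` and `b` in the subalgebra generated by the
matrices `ξ · L · ξ⁻¹` with `L` lower triangular. -/
theorem statement2 (n : ℕ) (hn : 1 ≤ n) (R : Type*) [CommRing R]
    (u : UniversalEnvelopingAlgebra R (Matrix (Fin n ⊕ Fin n) (Fin n ⊕ Fin n) R)) :
    u ∈ Submodule.span R
      {x : UniversalEnvelopingAlgebra R (Matrix (Fin n ⊕ Fin n) (Fin n ⊕ Fin n) R) |
        ∃ a ∈ Algebra.adjoin R
            {y : UniversalEnvelopingAlgebra R (Matrix (Fin n ⊕ Fin n) (Fin n ⊕ Fin n) R) |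
              ∃ h₁ h₂ : Matrix (Fin n) (Fin n) R,
                y = UniversalEnvelopingAlgebra.ι R (iotaBlk h₁ h₂)},
        ∃ b ∈ Algebra.adjoin R
            {y : UniversalEnvelopingAlgebra R (Matrix (Fin n ⊕ Fin n) (Fin n ⊕ Fin n) R) |
              ∃ L : Matrix (Fin n ⊕ Fin n) (Fin n ⊕ Fin n) R,
                (∀ i j : Fin n ⊕ Fin n,
                    (finSumFinEquiv i : ℕ) < (finSumFinEquiv j : ℕ) → L i j = 0) ∧
                y = UniversalEnvelopingAlgebra.ι R (xiMat n R * L * xiInvMat n R)},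
        x = a * b} := by
  classical
  set T₁ : Set (Matrix (Fin n ⊕ Fin n) (Fin n ⊕ Fin n) R) :=
    {m | ∃ h₁ h₂ : Matrix (Fin n) (Fin n) R, m = iotaBlk h₁ h₂} with hT₁
  set T₂ : Set (Matrix (Fin n ⊕ Fin n) (Fin n ⊕ Fin n) R) :=
    {m | ∃ L : Matrix (Fin n ⊕ Fin n) (Fin n ⊕ Fin n) R,
        (∀ i j : Fin n ⊕ Fin n,
            (finSumFinEquiv i : ℕ) < (finSumFinEquiv j : ℕ) → L i j = 0) ∧
        m = xiMat n R * L * xiInvMat n R} with hT₂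
  have hs₁ : {y : UniversalEnvelopingAlgebra R (Matrix (Fin n ⊕ Fin n) (Fin n ⊕ Fin n) R) |
      ∃ h₁ h₂ : Matrix (Fin n) (Fin n) R, y = UniversalEnvelopingAlgebra.ι R (iotaBlk h₁ h₂)}
      = ⇑(UniversalEnvelopingAlgebra.ι R) '' T₁ := by
    ext y
    constructor
    · rintro ⟨h₁, h₂, rfl⟩
      exact ⟨iotaBlk h₁ h₂, ⟨h₁, h₂, rfl⟩, rfl⟩
    · rintro ⟨m, ⟨h₁, h₂, rfl⟩, rfl⟩
      exact ⟨h₁, h₂, rfl⟩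
  have hs₂ : {y : UniversalEnvelopingAlgebra R (Matrix (Fin n ⊕ Fin n) (Fin n ⊕ Fin n) R) |
      ∃ L : Matrix (Fin n ⊕ Fin n) (Fin n ⊕ Fin n) R,
        (∀ i j : Fin n ⊕ Fin n,
            (finSumFinEquiv i : ℕ) < (finSumFinEquiv j : ℕ) → L i j = 0) ∧
        y = UniversalEnvelopingAlgebra.ι R (xiMat n R * L * xiInvMat n R)}
      = ⇑(UniversalEnvelopingAlgebra.ι R) '' T₂ := by
    ext y
    constructor
    · rintro ⟨L, hL, rfl⟩
      exact ⟨xiMat n R * L * xiInvMat n R, ⟨L, hL, rfl⟩, rfl⟩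
    · rintro ⟨m, ⟨L, hL, rfl⟩, rfl⟩
      exact ⟨L, hL, rfl⟩
  rw [hs₁, hs₂]
  refine uea_decomp_span R _ T₁ T₂ ?_ u
  intro M
  obtain ⟨D₁, D₂, L, hL, hM⟩ := matrix_decomp n R M
  exact ⟨iotaBlk D₁ D₂, ⟨D₁, D₂, rfl⟩, xiMat n R * L * xiInvMat n R, ⟨L, hL, rfl⟩, hM⟩
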